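/- Let the action of G on (X, μ) be ergodic. If for every representation L of X⋊G on a separable complex Hilbert space, every L-cocycle is an L-coboundary, then the action of G on (X, μ) has property T. -/

import Mathlib

open MeasureTheory Filter Topology
open scoped Pointwise symmDiff InnerProductSpace ENNReal

section Defs

variable (G : Type*) {X : Type*} [Group G] [MulAction G X] [MeasurableSpace X]

/-- The action of `G` on `X` is measurable and the measure `μ` is quasi-invariant:
for every `g`, the pushforward of `μ` under `x ↦ g • x` is equivalent to `μ`. -/
def QuasiInvariantAction (μ : Measure X) : Prop :=
  (∀ g : G, Measurable fun x : X => g • x) ∧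
    ∀ g : G, μ.map (fun x : X => g • x) ≪ μ ∧ μ ≪ μ.map (fun x : X => g • x)

/-- Ergodicity of the action: every measurable `A` with `μ((g • A) ∆ A) = 0` for all `g`
is null or conull. -/
def IsErgodicSMulAction (μ : Measure X) : Prop :=
  ∀ A : Set X, MeasurableSet A → (∀ g : G, μ ((g • A) ∆ A) = 0) → μ A = 0 ∨ μ A = 1

variable {G}
variable {K : Type*} [NormedAddCommGroup K] [InnerProductSpace ℂ K]
  [MeasurableSpace K] [BorelSpace K]

/-- A representation of the action groupoid `X ⋊ G` on the Hilbert space `K`. -/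
def IsGroupoidRep (μ : Measure X) (L : X → G → (K ≃ₗᵢ[ℂ] K)) : Prop :=
  (∀ (g : G) (v : K), Measurable fun x : X => L x g v) ∧
    ∀ g₁ g₂ : G, ∀ᵐ x ∂μ, ∀ v : K, L x (g₁ * g₂) v = L x g₁ (L (g₁⁻¹ • x) g₂ v)

/-- An `L`-cocycle. -/
def IsLCocycle (μ : Measure X) (L : X → G → (K ≃ₗᵢ[ℂ] K)) (b : X → G → K) : Prop :=
  (∀ g : G, Measurable fun x : X => b x g) ∧
    ∀ g₁ g₂ : G, ∀ᵐ x ∂μ, b x (g₁ * g₂) = b x g₁ + L x g₁ (b (g₁⁻¹ • x) g₂)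

/-- An `L`-coboundary. -/
def IsLCoboundary (μ : Measure X) (L : X → G → (K ≃ₗᵢ[ℂ] K)) (b : X → G → K) : Prop :=
  ∃ ξ : X → K, Measurable ξ ∧ ∀ g : G, ∀ᵐ x ∂μ, b x g = ξ x - L x g (ξ (g⁻¹ • x))

/-- A unit section: a measurable map `ξ : X → K` of norm one almost everywhere. -/
def IsUnitSection (μ : Measure X) (ξ : X → K) : Prop :=
  Measurable ξ ∧ ∀ᵐ x ∂μ, ‖ξ x‖ = 1

/-- The representation `L` has an invariant unit section. -/
def HasInvariantUnitSection (μ : Measure X) (L : X → G → (K ≃ₗᵢ[ℂ] K)) : Prop :=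
  ∃ ξ : X → K, IsUnitSection μ ξ ∧ ∀ g : G, ∀ᵐ x ∂μ, L x g (ξ (g⁻¹ • x)) = ξ x

/-- The representation `L` almost has invariant unit sections. -/
def AlmostHasInvariantUnitSections (μ : Measure X) (L : X → G → (K ≃ₗᵢ[ℂ] K)) : Prop :=
  ∃ ξ : ℕ → X → K, (∀ n, IsUnitSection μ (ξ n)) ∧
    ∀ g : G, ∀ᵐ x ∂μ,
      Tendsto (fun n => ‖L x g (ξ n (g⁻¹ • x)) - ξ n x‖) atTop (𝓝 0)

variable (G)

/-- Property (T) for the action of `G` on `(X, μ)`: every representation of `X ⋊ G`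
on a separable complex Hilbert space that almost has invariant unit sections has an
invariant unit section. -/
def ActionHasPropertyT (μ : Measure X) : Prop :=
  ∀ (K : Type) [NormedAddCommGroup K] [InnerProductSpace ℂ K]
    [CompleteSpace K] [SecondCountableTopology K]
    [MeasurableSpace K] [BorelSpace K]
    (L : X → G → (K ≃ₗᵢ[ℂ] K)),
    IsGroupoidRep μ L → AlmostHasInvariantUnitSections μ L → HasInvariantUnitSection μ L

end Defs

section VCPTAux
open TopologicalSpace
open scoped NNReal
set_option linter.unusedSectionVars false
namespace VCPT

variable {K : Type*} [NormedAddCommGroup K] [InnerProductSpace ℂ K]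

theorem two_toReal_pos : (0:ℝ) < (2:ℝ≥0∞).toReal := by norm_num

theorem memℓp_two_iff {f : ℕ → K} : Memℓp f 2 ↔ Summable fun j => ‖f j‖ ^ 2 := by
  rw [memℓp_gen_iff (p := 2) two_toReal_pos]
  norm_num

theorem memℓp_two_iff_tsum {f : ℕ → K} :
    Memℓp f 2 ↔ (∑' j, ((‖f j‖₊ : ℝ≥0∞) ^ 2)) ≠ ∞ := by
  rw [memℓp_two_iff]
  have h1 : ∀ j, ((‖f j‖₊ : ℝ≥0∞) ^ 2) = ((‖f j‖₊ ^ 2 : ℝ≥0) : ℝ≥0∞) := by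
    intro j; push_cast; ring
  have h2 : (fun j => ‖f j‖ ^ 2) = fun j => ((‖f j‖₊ ^ 2 : ℝ≥0) : ℝ) := by
    funext j; push_cast; rfl
  rw [h2, NNReal.summable_coe]
  simp_rw [h1]
  rw [ENNReal.tsum_coe_ne_top_iff_summable]

theorem Memℓp.map_iso {f : ℕ → K} (e : ℕ → (K ≃ₗᵢ[ℂ] K)) (hf : Memℓp f 2) :
    Memℓp (fun j => e j (f j)) 2 := by
  rw [memℓp_two_iff] at hf ⊢
  simpa only [LinearIsometryEquiv.norm_map] using hf

theorem single_add (i : ℕ) (a b : K) :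
    lp.single (E := fun _ : ℕ => K) 2 i (a + b) = lp.single 2 i a + lp.single 2 i b := by
  refine lp.ext (funext fun j => ?_)
  by_cases h : j = i
  · subst h
    simp [lp.single_apply_self, lp.coeFn_add, Pi.add_apply]
  · simp [lp.single_apply_ne 2 i _ h, lp.coeFn_add, Pi.add_apply]

theorem isometry_single (i : ℕ) :
    Isometry (fun a : K => lp.single (E := fun _ : ℕ => K) 2 i a) := by
  refine Isometry.of_dist_eq fun a b => ?_
  have h : lp.single (E := fun _ : ℕ => K) 2 i a - lp.single 2 i b = lp.single 2 i (a - b) := by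
    rw [sub_eq_add_neg, sub_eq_add_neg, single_add, lp.single_neg]
  rw [dist_eq_norm, dist_eq_norm, h]
  exact lp.norm_single (E := fun _ : ℕ => K) (p := 2) (by norm_num) i (a - b)

theorem coord_lipschitz (j : ℕ) (f g : lp (fun _ : ℕ => K) 2) :
    dist (f j) (g j) ≤ dist f g := by
  rw [dist_eq_norm, dist_eq_norm]
  have := lp.norm_apply_le_norm (E := fun _ : ℕ => K) (p := 2) two_ne_zero (f - g) j
  rwa [lp.coeFn_sub, Pi.sub_apply] at this

theorem continuous_coord (j : ℕ) : Continuous fun f : lp (fun _ : ℕ => K) 2 => f j :=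
  (LipschitzWith.of_dist_le_mul (K := 1) fun f g => by
    simpa using coord_lipschitz j f g).continuous

theorem lpnat_secondCountable [SecondCountableTopology K] :
    SecondCountableTopology (lp (fun _ : ℕ => K) 2) := by
  suffices h : SeparableSpace (lp (fun _ : ℕ => K) 2) from
    UniformSpace.secondCountable_of_separable _
  have hT : ∀ m : ℕ, Continuous (fun v : ℕ → K =>
      ∑ j ∈ Finset.range m, lp.single (E := fun _ : ℕ => K) 2 j (v j)) := fun m =>
    continuous_finset_sum _ fun j _ => (isometry_single j).continuous.comp (continuous_apply j)
  have hsep : IsSeparable (⋃ m : ℕ, Set.range fun v : ℕ → K =>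
      ∑ j ∈ Finset.range m, lp.single (E := fun _ : ℕ => K) 2 j (v j)) :=
    .iUnion fun m => isSeparable_range (hT m)
  have huniv : IsSeparable (Set.univ : Set (lp (fun _ : ℕ => K) 2)) := by
    refine hsep.closure.mono fun f _ => ?_
    have ht := (lp.hasSum_single (by norm_num) f).tendsto_sum_nat
    refine mem_closure_of_tendsto ht ?_
    filter_upwards with m
    exact Set.mem_iUnion.2 ⟨m, Set.mem_range.2 ⟨fun j => f j, rfl⟩⟩
  exact isSeparable_univ_iff.1 huniv

/-- Diagonal action of a family of isometries on `ℓ²(ℕ, K)`. -/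
noncomputable def lpCongr (e : ℕ → (K ≃ₗᵢ[ℂ] K)) :
    lp (fun _ : ℕ => K) 2 ≃ₗᵢ[ℂ] lp (fun _ : ℕ => K) 2 where
  toFun f := ⟨fun j => e j (f j), Memℓp.map_iso e f.2⟩
  invFun f := ⟨fun j => (e j).symm (f j), Memℓp.map_iso (fun j => (e j).symm) f.2⟩
  map_add' f g := by
    refine lp.ext (funext fun j => ?_)
    simp only [lp.coeFn_add, Pi.add_apply]
    exact map_add _ _ _
  map_smul' c f := by
    refine lp.ext (funext fun j => ?_)
    simp only [lp.coeFn_smul, Pi.smul_apply, RingHom.id_apply]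
    exact map_smul _ _ _
  left_inv f := lp.ext (funext fun j => (e j).symm_apply_apply _)
  right_inv f := lp.ext (funext fun j => (e j).apply_symm_apply _)
  norm_map' f := by
    rw [lp.norm_eq_tsum_rpow two_toReal_pos, lp.norm_eq_tsum_rpow two_toReal_pos f]
    congr 1
    exact tsum_congr fun j => by
      show ‖e j (f j)‖ ^ _ = _
      rw [LinearIsometryEquiv.norm_map]

@[simp] theorem lpCongr_apply (e : ℕ → (K ≃ₗᵢ[ℂ] K)) (f : lp (fun _ : ℕ => K) 2) (j : ℕ) :
    (lpCongr e f) j = e j (f j) := rfl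

variable {X : Type*} [MeasurableSpace X]
variable [MeasurableSpace K] [BorelSpace K] [SecondCountableTopology K]

theorem measurableSet_memℓp {s : X → ℕ → K} (hs : ∀ j, Measurable fun x => s x j) :
    MeasurableSet {x | Memℓp (s x) 2} := by
  have h : {x | Memℓp (s x) 2} = {x | (∑' j, ((‖s x j‖₊ : ℝ≥0∞) ^ 2)) ≠ ∞} := by
    ext x; exact memℓp_two_iff_tsum
  rw [h]
  have hm : Measurable fun x => (∑' j, ((‖s x j‖₊ : ℝ≥0∞) ^ 2)) :=
    Measurable.ennreal_tsum fun j => ((hs j).nnnorm.coe_nnreal_ennreal).pow_const 2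
  exact (hm (measurableSet_singleton ∞)).compl

variable [MeasurableSpace (lp (fun _ : ℕ => K) 2)] [BorelSpace (lp (fun _ : ℕ => K) 2)]

open scoped Classical in
theorem measurable_toLp {s : X → ℕ → K} (hs : ∀ j, Measurable fun x => s x j) :
    Measurable fun x =>
      if h : Memℓp (s x) 2 then (⟨s x, h⟩ : lp (fun _ : ℕ => K) 2) else 0 := by
  haveI := lpnat_secondCountable (K := K)
  have hsub : Measurable fun y : {x | Memℓp (s x) 2} =>
      (⟨s y.1, y.2⟩ : lp (fun _ : ℕ => K) 2) := by
    refine measurable_of_tendsto_metrizable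
      (f := fun m (y : {x | Memℓp (s x) 2}) =>
        ∑ j ∈ Finset.range m, lp.single 2 j (s y.1 j)) (fun m => ?_) ?_
    · exact Finset.measurable_sum _ fun j _ =>
        ((isometry_single j).continuous.measurable).comp ((hs j).comp measurable_subtype_coe)
    · rw [tendsto_pi_nhds]
      intro y
      exact (lp.hasSum_single (by norm_num) (⟨s y.1, y.2⟩ : lp (fun _ : ℕ => K) 2)).tendsto_sum_nat
  have heq : (fun x => if h : Memℓp (s x) 2 then (⟨s x, h⟩ : lp (fun _ : ℕ => K) 2) else 0)
      = fun x => if hx : x ∈ {x | Memℓp (s x) 2}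
          then (fun y : {x | Memℓp (s x) 2} => (⟨s y.1, y.2⟩ : lp (fun _ : ℕ => K) 2)) ⟨x, hx⟩
          else (fun _ : (({x | Memℓp (s x) 2} : Set X)ᶜ : Set X) =>
            (0 : lp (fun _ : ℕ => K) 2)) ⟨x, hx⟩ := rfl
  rw [heq]
  exact Measurable.dite hsub measurable_const (measurableSet_memℓp hs)

theorem measurable_iso_apply {V : Type*} [NormedAddCommGroup V] [InnerProductSpace ℂ V]
    [SecondCountableTopology V] [MeasurableSpace V] [BorelSpace V]
    (T : X → (V ≃ₗᵢ[ℂ] V)) (hT : ∀ v : V, Measurable fun x => T x v)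
    {w : X → V} (hw : Measurable w) : Measurable fun x => T x (w x) := by
  have h := measurable_uncurry_of_continuous_of_measurable
      (u := fun (v : V) (x : X) => T x v) (fun x => (T x).continuous) hT
  exact h.comp (hw.prodMk measurable_id)

end VCPT
end VCPTAux


/-- If the ergodic action of a countable discrete group `G` on a standard Borel probability
space `(X, μ)` with quasi-invariant `μ` is such that, for every representation `L` of `X ⋊ G`
on a separable complex Hilbert space, every `L`-cocycle is an `L`-coboundary, then the action
has property (T). -/
theorem vanishing_cohomology_implies_propertyT
    {G X : Type*} [Group G] [Countable G]
    [MeasurableSpace X] [StandardBorelSpace X] [MulAction G X]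
    (μ : Measure X) [IsProbabilityMeasure μ]
    (hqi : QuasiInvariantAction G μ) (herg : IsErgodicSMulAction G μ)
    (hvanish : ∀ (K : Type) [NormedAddCommGroup K] [InnerProductSpace ℂ K]
      [CompleteSpace K] [SecondCountableTopology K] [MeasurableSpace K] [BorelSpace K]
      (L : X → G → (K ≃ₗᵢ[ℂ] K)), IsGroupoidRep μ L →
      ∀ b : X → G → K, IsLCocycle μ L b → IsLCoboundary μ L b) :
    ActionHasPropertyT G μ := by
  classical
  obtain ⟨hsm, habs⟩ := hqi
  have hQMP : ∀ g : G, MeasureTheory.Measure.QuasiMeasurePreserving (fun x : X => g • x) μ μ :=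
    fun g => ⟨hsm g, (habs g).1⟩
  intro K _i1 _i2 _i3 _i4 _i5 _i6 L hL hAlm
  obtain ⟨ξ, hξu, hξt⟩ := hAlm
  obtain ⟨gg, hgg⟩ := exists_surjective_nat G
  -- the basic coboundary cocycles
  set c : ℕ → X → G → K := fun n x g => ξ n x - L x g (ξ n (g⁻¹ • x)) with hc
  have hmξ : ∀ (n : ℕ) (g : G), Measurable fun x => ξ n (g⁻¹ • x) :=
    fun n g => (hξu n).1.comp (hsm g⁻¹)
  have hmc : ∀ (n : ℕ) (g : G), Measurable fun x => c n x g := fun n g =>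
    (hξu n).1.sub (VCPT.measurable_iso_apply (fun x => L x g) (hL.1 g) (hmξ n g))
  have htend : ∀ g : G, ∀ᵐ x ∂μ, Tendsto (fun n => ‖c n x g‖) atTop (𝓝 0) := by
    intro g
    filter_upwards [hξt g] with x hx
    simpa [hc, norm_sub_rev] using hx
  -- convergence in measure and subsequence extraction
  have hPev : ∀ j : ℕ, ∀ᶠ n in atTop, ∀ k ∈ Set.Iic j,
      μ {x | (1:ℝ)/(2^j * (j+1)) ≤ ‖c n x (gg k)‖} ≤ (2:ℝ≥0∞)⁻¹ ^ j := by
    intro j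
    rw [eventually_all_finite (Set.finite_Iic j)]
    intro k _
    have hTIM : MeasureTheory.TendstoInMeasure μ (fun n x => ‖c n x (gg k)‖) atTop
        (fun _ => (0:ℝ)) :=
      MeasureTheory.tendstoInMeasure_of_tendsto_ae
        (fun n => ((hmc n (gg k)).norm).aestronglyMeasurable) (htend (gg k))
    have hεpos : (0:ℝ) < (1:ℝ)/(2^j * (j+1)) := by positivity
    have h0 := hTIM (ENNReal.ofReal ((1:ℝ)/(2^j * (j+1)))) (ENNReal.ofReal_pos.2 hεpos)
    have hδpos : (0:ℝ≥0∞) < (2:ℝ≥0∞)⁻¹ ^ j := ENNReal.pow_pos (by simp) j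
    obtain ⟨N, hN⟩ := (ENNReal.tendsto_atTop_zero.mp h0) _ hδpos
    rw [eventually_atTop]
    refine ⟨N, fun n hn => ?_⟩
    have := hN n hn
    have hset : {x | ENNReal.ofReal ((1:ℝ)/(2^j * (j+1))) ≤ edist (‖c n x (gg k)‖) ((fun _ => (0:ℝ)) x)}
        = {x | (1:ℝ)/(2^j * (j+1)) ≤ ‖c n x (gg k)‖} := by
      ext x
      simp only [Set.mem_setOf_eq, edist_dist, Real.dist_eq, sub_zero, abs_norm]
      exact ENNReal.ofReal_le_ofReal_iff (norm_nonneg _)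
    rwa [hset] at this
  obtain ⟨φ, hφmono, hφ⟩ := Filter.extraction_forall_of_eventually hPev
  -- the scaled coordinate functions
  set sf : X → G → ℕ → K := fun x g j => ((j:ℂ)+1) • c (φ j) x g with hsf
  have hmsf : ∀ (g : G) (j : ℕ), Measurable fun x => sf x g j := fun g j =>
    (hmc (φ j) g).const_smul _
  -- a.e. square-summability
  have hmem : ∀ᵐ x ∂μ, ∀ g : G, Memℓp (sf x g) 2 := by
    rw [ae_all_iff]
    intro g
    obtain ⟨k, rfl⟩ := hgg g
    set s : ℕ → Set X := fun j =>
      {x | (1:ℝ)/(2^(j+k) * ((((j+k) : ℕ) : ℝ)+1)) ≤ ‖c (φ (j+k)) x (gg k)‖} with hsdef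
    have hms : (∑' j, μ (s j)) ≠ ∞ := by
      have hb : ∀ j, μ (s j) ≤ (2:ℝ≥0∞)⁻¹ ^ j := by
        intro j
        refine le_trans (hφ (j+k) k (Set.mem_Iic.2 (by omega))) ?_
        exact pow_le_pow_right_of_le_one' (by simp [ENNReal.inv_le_one]) (by omega)
      refine ne_top_of_le_ne_top ?_ (ENNReal.tsum_le_tsum hb)
      rw [ENNReal.tsum_geometric, ENNReal.one_sub_inv_two]
      simp
    have hBC := MeasureTheory.ae_eventually_notMem hms
    filter_upwards [hBC] with x hx
    rw [VCPT.memℓp_two_iff]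
    obtain ⟨N, hN⟩ := eventually_atTop.1 hx
    rw [← summable_nat_add_iff (N+k)]
    have hbound : ∀ j : ℕ, ‖sf x (gg k) (j + (N+k))‖ ^ 2 ≤ ((1:ℝ)/4) ^ j := by
      intro j
      have hx' := hN (j + N) (by omega)
      rw [hsdef] at hx'
      simp only [Set.mem_setOf_eq, not_le] at hx'
      have hidx : j + N + k = j + (N + k) := by omega
      rw [hidx] at hx'
      set m := j + (N + k) with hm
      have hnorm : ‖sf x (gg k) m‖ = ((m:ℝ)+1) * ‖c (φ m) x (gg k)‖ := by
        rw [hsf]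
        simp only []
        rw [norm_smul]
        congr 1
        have : ((m:ℂ)+1) = ((m+1 : ℕ) : ℂ) := by push_cast; ring
        rw [this, Complex.norm_natCast]
        push_cast; ring
      have hle : ‖sf x (gg k) m‖ ≤ ((1:ℝ)/2)^m := by
        rw [hnorm]
        have h1 : ‖c (φ m) x (gg k)‖ ≤ (1:ℝ)/(2^m * (((m:ℕ):ℝ)+1)) := le_of_lt hx'
        have h2 : (0:ℝ) < (m:ℝ)+1 := by positivity
        calc ((m:ℝ)+1) * ‖c (φ m) x (gg k)‖ ≤ ((m:ℝ)+1) * ((1:ℝ)/(2^m * (((m:ℕ):ℝ)+1))) :=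
              mul_le_mul_of_nonneg_left h1 (le_of_lt h2)
          _ = ((1:ℝ)/2)^m := by
              rw [div_pow, one_pow]
              field_simp
      have hmj : ((1:ℝ)/2)^m ≤ ((1:ℝ)/2)^j := by
        apply pow_le_pow_of_le_one (by norm_num) (by norm_num) (by omega)
      calc ‖sf x (gg k) (j+(N+k))‖ ^ 2 ≤ (((1:ℝ)/2)^j)^2 := by
            have h0 : (0:ℝ) ≤ ‖sf x (gg k) m‖ := norm_nonneg _
            have hh := le_trans hle hmj
            nlinarith [norm_nonneg (sf x (gg k) m)]
        _ = ((1:ℝ)/4) ^ j := by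
            rw [← pow_mul, mul_comm, pow_mul]
            norm_num
    refine Summable.of_nonneg_of_le (fun j => by positivity) hbound ?_
    exact summable_geometric_of_lt_one (by norm_num) (by norm_num)
  -- the Hilbert space ℓ²(ℕ, K)
  letI : MeasurableSpace (lp (fun _ : ℕ => K) 2) := borel _
  haveI : BorelSpace (lp (fun _ : ℕ => K) 2) := ⟨rfl⟩
  haveI : SecondCountableTopology (lp (fun _ : ℕ => K) 2) := VCPT.lpnat_secondCountable
  set L' : X → G → (lp (fun _ : ℕ => K) 2 ≃ₗᵢ[ℂ] lp (fun _ : ℕ => K) 2) :=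
    fun x g => VCPT.lpCongr (fun _ => L x g) with hL'
  set b : X → G → lp (fun _ : ℕ => K) 2 :=
    fun x g => if h : Memℓp (sf x g) 2 then (⟨sf x g, h⟩ : lp (fun _ : ℕ => K) 2) else 0 with hb
  have hmb : ∀ g : G, Measurable fun x => b x g := fun g => VCPT.measurable_toLp (hmsf g)
  -- L' is a representation
  have hrep : IsGroupoidRep μ L' := by
    constructor
    · intro g v
      have hv : (fun x => L' x g v) = fun x =>
          if h : Memℓp (fun j => L x g (v j)) 2
          then (⟨fun j => L x g (v j), h⟩ : lp (fun _ : ℕ => K) 2) else 0 := by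
        funext x
        rw [dif_pos (VCPT.Memℓp.map_iso (fun _ => L x g) v.2)]
        rfl
      rw [hv]
      exact VCPT.measurable_toLp fun j =>
        VCPT.measurable_iso_apply (fun x => L x g) (hL.1 g) measurable_const
    · intro g₁ g₂
      filter_upwards [hL.2 g₁ g₂] with x hx v
      exact lp.ext (funext fun j => hx (v j))
  -- cocycle identity for c
  have hcoc_c : ∀ g₁ g₂ : G, ∀ᵐ x ∂μ, ∀ n : ℕ,
      c n x (g₁ * g₂) = c n x g₁ + L x g₁ (c n (g₁⁻¹ • x) g₂) := by
    intro g₁ g₂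
    filter_upwards [hL.2 g₁ g₂] with x hx n
    have hsmul : (g₁ * g₂)⁻¹ • x = g₂⁻¹ • (g₁⁻¹ • x) := by
      rw [mul_inv_rev, mul_smul]
    simp only [hc]
    rw [hsmul, hx (ξ n (g₂⁻¹ • (g₁⁻¹ • x))), map_sub]
    abel
  -- b is an L'-cocycle
  have hbcoc : IsLCocycle μ L' b := by
    refine ⟨hmb, ?_⟩
    intro g₁ g₂
    have hmem₂ : ∀ᵐ x ∂μ, ∀ g : G, Memℓp (sf (g₁⁻¹ • x) g) 2 := (hQMP g₁⁻¹).ae hmem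
    filter_upwards [hmem, hmem₂, hcoc_c g₁ g₂] with x h1 h2 hcx
    have hs : sf x (g₁ * g₂) = fun j => sf x g₁ j + L x g₁ (sf (g₁⁻¹ • x) g₂ j) := by
      funext j
      simp only [hsf]
      rw [hcx (φ j), smul_add, _root_.map_smul]
    rw [hb]
    simp only []
    rw [dif_pos (h1 (g₁*g₂)), dif_pos (h1 g₁), dif_pos (h2 g₂)]
    refine lp.ext (funext fun j => ?_)
    have hco : ((⟨sf x g₁, h1 g₁⟩ : lp (fun _ : ℕ => K) 2)
        + L' x g₁ (⟨sf (g₁⁻¹ • x) g₂, h2 g₂⟩ : lp (fun _ : ℕ => K) 2)) j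
        = sf x g₁ j + L x g₁ (sf (g₁⁻¹ • x) g₂ j) := by
      rw [lp.coeFn_add, Pi.add_apply]
      rfl
    rw [hco]
    exact congrFun hs j
  -- apply vanishing cohomology
  obtain ⟨Ξ, hΞm, hΞb⟩ := hvanish (lp (fun _ : ℕ => K) 2) L' hrep b hbcoc
  -- coordinate extraction
  have hkey : ∀ g : G, ∀ᵐ x ∂μ, ∀ j : ℕ,
      ((j:ℂ)+1) • c (φ j) x g = Ξ x j - L x g (Ξ (g⁻¹ • x) j) := by
    intro g
    filter_upwards [hΞb g, hmem] with x hbx h1 j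
    have hbe : b x g = (⟨sf x g, h1 g⟩ : lp (fun _ : ℕ => K) 2) := by
      rw [hb]; exact dif_pos _
    rw [hbe] at hbx
    have hj := congrFun (congrArg (fun f : lp (fun _ : ℕ => K) 2 => (f : ∀ _ : ℕ, K)) hbx) j
    simp only [lp.coeFn_sub, Pi.sub_apply] at hj
    exact hj
  -- the invariant sections candidates
  set η : ℕ → X → K := fun j x => ξ (φ j) x - (((j:ℂ)+1)⁻¹) • Ξ x j with hη
  have hmη : ∀ j, Measurable (η j) := fun j =>
    (hξu (φ j)).1.sub (((VCPT.continuous_coord j).measurable.comp hΞm).const_smul _)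
  have hinv : ∀ g : G, ∀ᵐ x ∂μ, ∀ j, L x g (η j (g⁻¹ • x)) = η j x := by
    intro g
    filter_upwards [hkey g] with x hx j
    have hne : ((j:ℂ)+1) ≠ 0 := Nat.cast_add_one_ne_zero j
    apply smul_right_injective K hne
    show ((j:ℂ)+1) • (L x g) (η j (g⁻¹ • x)) = ((j:ℂ)+1) • η j x
    have h1 : ((j:ℂ)+1) • η j x = ((j:ℂ)+1) • ξ (φ j) x - Ξ x j := by
      simp only [hη]
      rw [smul_sub, smul_inv_smul₀ hne]
    have h2 : ((j:ℂ)+1) • η j (g⁻¹ • x) = ((j:ℂ)+1) • ξ (φ j) (g⁻¹ • x) - Ξ (g⁻¹ • x) j := by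
      simp only [hη]
      rw [smul_sub, smul_inv_smul₀ hne]
    rw [← _root_.map_smul, h2, map_sub, _root_.map_smul, h1]
    have hx' := hx j
    simp only [hc] at hx'
    rw [smul_sub] at hx'
    rw [sub_eq_sub_iff_sub_eq_sub]
    rw [← neg_sub (((j:ℂ)+1) • ξ (φ j) x), hx', neg_sub]
  -- a.e. some η j is nonzero
  have hnz : ∀ᵐ x ∂μ, ∃ j, η j x ≠ 0 := by
    have hnorm : ∀ᵐ x ∂μ, ∀ n : ℕ, ‖ξ n x‖ = 1 := ae_all_iff.2 fun n => (hξu n).2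
    filter_upwards [hnorm] with x hx
    obtain ⟨j, hj⟩ := exists_nat_gt ‖Ξ x‖
    refine ⟨j, fun h0 => ?_⟩
    have hval : ξ (φ j) x = (((j:ℂ)+1)⁻¹) • Ξ x j := by
      simp only [hη] at h0
      rwa [sub_eq_zero] at h0
    have hn1 : (1:ℝ) = ‖(((j:ℂ)+1)⁻¹) • Ξ x j‖ := by rw [← hval, hx]
    rw [norm_smul] at hn1
    have hc1 : ‖((j:ℂ)+1)⁻¹‖ = ((j:ℝ)+1)⁻¹ := by
      rw [norm_inv]
      congr 1
      have : ((j:ℂ)+1) = ((j+1 : ℕ) : ℂ) := by push_cast; ring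
      rw [this, Complex.norm_natCast]
      push_cast; ring
    have hle : ‖Ξ x j‖ ≤ ‖Ξ x‖ := lp.norm_apply_le_norm two_ne_zero (Ξ x) j
    rw [hc1] at hn1
    have hjpos : (0:ℝ) < (j:ℝ)+1 := by positivity
    have h3 : ((j:ℝ)+1)⁻¹ * ‖Ξ x j‖ ≤ ((j:ℝ)+1)⁻¹ * ‖Ξ x‖ := by
      apply mul_le_mul_of_nonneg_left hle
      positivity
    have h4 : ((j:ℝ)+1)⁻¹ * ‖Ξ x‖ < 1 := by
      rw [inv_mul_lt_iff₀ hjpos, mul_one]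
      linarith
    linarith
  -- pick an index with positive measure
  obtain ⟨j₀, hj₀⟩ : ∃ j, μ {x | η j x ≠ 0} ≠ 0 := by
    by_contra hcon
    push_neg at hcon
    have hun : μ (⋃ j, {x | η j x ≠ 0}) = 0 := measure_iUnion_null hcon
    have hcompl : μ {x | ¬ ∃ j, η j x ≠ 0} = 0 := by
      rw [← MeasureTheory.ae_iff]
      exact hnz
    have hsub : (Set.univ : Set X) ⊆ {x | ¬ ∃ j, η j x ≠ 0} ∪ ⋃ j, {x | η j x ≠ 0} := by
      intro x _
      by_cases hx : ∃ j, η j x ≠ 0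
      · right; obtain ⟨j, hj⟩ := hx; exact Set.mem_iUnion.2 ⟨j, hj⟩
      · left; exact hx
    have hmono := measure_mono (μ := μ) hsub
    rw [measure_univ] at hmono
    have hle := le_trans hmono (measure_union_le _ _)
    rw [hcompl, hun, add_zero] at hle
    exact absurd (le_antisymm hle zero_le) one_ne_zero
  -- the set where η j₀ is nonzero is invariant, hence conull
  set A : Set X := {x | η j₀ x ≠ 0} with hA
  have hAmeas : MeasurableSet A := by
    have h0 : MeasurableSet ((η j₀) ⁻¹' {0}) := (hmη j₀) (measurableSet_singleton 0)
    have : A = ((η j₀) ⁻¹' {0})ᶜ := by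
      ext x; simp [hA]
    rw [this]; exact h0.compl
  have hA1 : μ A = 1 := by
    have hergA := herg A hAmeas ?_
    · rcases hergA with h0 | h1
      · exact absurd h0 hj₀
      · exact h1
    intro g
    have hae : ∀ᵐ x ∂μ, (x ∈ g • A ↔ x ∈ A) := by
      filter_upwards [hinv g] with x hx
      rw [Set.mem_smul_set_iff_inv_smul_mem]
      have : η j₀ (g⁻¹ • x) = 0 ↔ η j₀ x = 0 := by
        rw [← hx j₀]
        exact (EmbeddingLike.map_eq_zero_iff).symm
      simp only [hA, Set.mem_setOf_eq]
      exact not_congr this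
    have hsubset : (g • A) ∆ A ⊆ {x | ¬(x ∈ g • A ↔ x ∈ A)} := by
      intro x hx
      simp only [Set.mem_symmDiff] at hx
      simp only [Set.mem_setOf_eq]
      tauto
    refine measure_mono_null hsubset ?_
    rw [← MeasureTheory.ae_iff]
    exact hae
  -- a unit vector to use where η j₀ vanishes
  haveI : Filter.NeBot (MeasureTheory.ae μ) := by
    rw [MeasureTheory.ae_neBot]
    intro h0
    have hμu := measure_univ (μ := μ)
    rw [h0] at hμu
    simp at hμu
  obtain ⟨x₀, hx₀⟩ := ((hξu 0).2).exists
  set v₀ : K := ξ 0 x₀ with hv₀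
  -- the invariant unit section
  set ζ : X → K := fun x =>
    if η j₀ x = 0 then v₀ else ((‖η j₀ x‖ : ℂ))⁻¹ • η j₀ x with hζ
  have hζm : Measurable ζ := by
    have hset : MeasurableSet {x | η j₀ x = 0} := by
      have : {x | η j₀ x = 0} = (η j₀) ⁻¹' {0} := by ext x; simp
      rw [this]; exact (hmη j₀) (measurableSet_singleton 0)
    refine Measurable.ite hset measurable_const ?_
    have hsc : Measurable fun x => ((‖η j₀ x‖ : ℂ))⁻¹ :=
      (Complex.measurable_ofReal.comp (hmη j₀).norm).inv
    exact ((continuous_smul.measurable : Measurable fun p : ℂ × K => p.1 • p.2)).comp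
      (hsc.prodMk (hmη j₀))
  have hζu : ∀ᵐ x ∂μ, ‖ζ x‖ = 1 := by
    refine Filter.Eventually.of_forall fun x => ?_
    rw [hζ]; simp only []
    by_cases hx : η j₀ x = 0
    · rw [if_pos hx]; exact hx₀
    · rw [if_neg hx, norm_smul, norm_inv, Complex.norm_real, norm_norm]
      exact inv_mul_cancel₀ (norm_ne_zero_iff.2 hx)
  refine ⟨ζ, ⟨hζm, hζu⟩, ?_⟩
  intro g
  have hAae : ∀ᵐ x ∂μ, η j₀ x ≠ 0 := by
    rw [MeasureTheory.ae_iff]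
    have : {x | ¬ η j₀ x ≠ 0} = Aᶜ := by ext x; simp [hA]
    rw [this]
    rw [MeasureTheory.prob_compl_eq_zero_iff hAmeas]
    exact hA1
  have hA'ae : ∀ᵐ x ∂μ, η j₀ (g⁻¹ • x) ≠ 0 := (hQMP g⁻¹).ae hAae
  filter_upwards [hinv g, hAae, hA'ae] with x hx hnx hnx'
  rw [hζ]
  simp only []
  rw [if_neg hnx', if_neg hnx, _root_.map_smul]
  have hn : ‖η j₀ (g⁻¹ • x)‖ = ‖η j₀ x‖ := by
    rw [← hx j₀]
    exact (LinearIsometryEquiv.norm_map _ _).symm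
  rw [hx j₀, hn]
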